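/- Let R be a ring with identity, a, b, c ∈ R and j_a, j_b, j_c ∈ J(R). Suppose a^{‖(b,c)} exists, b⁺ and c⁺ are reflexive inverses of b and c, and that (1 − b·b⁺)·j_b·(1 + b⁺·j_b)⁻¹·(1 − b⁺·b) = 0 and (1 − c·c⁺)·j_c·(1 + c⁺·j_c)⁻¹·(1 − c⁺·c) = 0. Set j := j_a + a·j_b·b⁺ + c⁺·j_c·a + j_a·j_b·b⁺ + c⁺·j_c·j_a + c⁺·j_c·a·j_b·b⁺ + c⁺·j_c·j_a·j_b·b⁺. Then 1 + j·a^{‖(b,c)} is a unit and the (b + j_b, c + j_c)-inverse of a + j_a exists and equals (1 + j_b·b⁺)·a^{‖(b,c)}·(1 + j·a^{‖(b,c)})⁻¹·(1 + c⁺·j_c). -/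

import Mathlib

/-- `y` is the (b,c)-inverse of `a`: `c*a*y = c`, `y*a*b = b`, `y ∈ bR ∩ Rc`. -/
def IsBCInverse {R : Type*} [Ring R] (a b c y : R) : Prop :=
  c * a * y = c ∧ y * a * b = b ∧ (∃ s, y = b * s) ∧ (∃ t, y = t * c)

/-- In any ring, `1 + x` is a unit whenever `x` is in the Jacobson radical. -/
theorem isUnit_one_add_of_mem_jacobson_bot {R : Type*} [Ring R] {x : R}
    (hx : x ∈ Ideal.jacobson (⊥ : Ideal R)) : IsUnit (1 + x) := by
  obtain ⟨z, hz⟩ := Ideal.mem_jacobson_iff.1 hx 1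
  rw [Ideal.mem_bot, mul_one] at hz
  have hz1 : z * (1 + x) = 1 := by linear_combination (norm := noncomm_ring) hz
  obtain ⟨w, hw⟩ := Ideal.mem_jacobson_iff.1 (neg_mem (Ideal.mul_mem_left _ z hx)) 1
  rw [Ideal.mem_bot, mul_one] at hw
  have hw1 : w * z = 1 := by linear_combination (norm := noncomm_ring) hw + w * hz1
  have hwx : w = 1 + x := by
    calc w = w * (z * (1 + x)) := by rw [hz1, mul_one]
    _ = w * z * (1 + x) := by rw [mul_assoc]
    _ = 1 + x := by rw [hw1, one_mul]
  exact ⟨⟨1 + x, z, hwx ▸ hw1, hz1⟩, rfl⟩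

/-- under the hypotheses, with
`j = j_a + a j_b b⁺ + c⁺ j_c a + j_a j_b b⁺ + c⁺ j_c j_a + c⁺ j_c a j_b b⁺ + c⁺ j_c j_a j_b b⁺`,
the element `1 + j * a^{‖(b,c)}` is a unit and
`(a + j_a)^{‖(b+j_b, c+j_c)} = (1 + j_b b⁺) a^{‖(b,c)} (1 + j a^{‖(b,c)})⁻¹ (1 + c⁺ j_c)`. -/
theorem stmt2 {R : Type*} [Ring R] (a b c y bp cp ja jb jc : R)
    (hja : ja ∈ Ideal.jacobson (⊥ : Ideal R))
    (hjb : jb ∈ Ideal.jacobson (⊥ : Ideal R))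
    (hjc : jc ∈ Ideal.jacobson (⊥ : Ideal R))
    (hy : IsBCInverse a b c y)
    (hbp : b * bp * b = b ∧ bp * b * bp = bp)
    (hcp : c * cp * c = c ∧ cp * c * cp = cp)
    (hb0 : (1 - b * bp) * jb * Ring.inverse (1 + bp * jb) * (1 - bp * b) = 0)
    (hc0 : (1 - c * cp) * jc * Ring.inverse (1 + cp * jc) * (1 - cp * c) = 0) :
    ∀ j : R, j = ja + a * jb * bp + cp * jc * a + ja * jb * bp + cp * jc * ja
        + cp * jc * a * jb * bp + cp * jc * ja * jb * bp →
      IsUnit (1 + j * y) ∧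
      IsBCInverse (a + ja) (b + jb) (c + jc)
        ((1 + jb * bp) * y * Ring.inverse (1 + j * y) * (1 + cp * jc)) := by
  obtain ⟨hcay, hyab, ⟨s, hs⟩, ⟨t, ht⟩⟩ := hy
  obtain ⟨hb1, -⟩ := hbp
  obtain ⟨hc1, -⟩ := hcp
  intro j hj
  -- the Jacobson radical is a two-sided ideal
  have hJr : ∀ {x : R}, x ∈ Ideal.jacobson (⊥ : Ideal R) → ∀ r : R,
      x * r ∈ Ideal.jacobson (⊥ : Ideal R) := fun {x} hx r =>
    Ideal.mul_mem_right r _ hx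
  have hJl : ∀ {x : R}, x ∈ Ideal.jacobson (⊥ : Ideal R) → ∀ r : R,
      r * x ∈ Ideal.jacobson (⊥ : Ideal R) := fun {x} hx r => Ideal.mul_mem_left _ r hx
  have hjJ : j ∈ Ideal.jacobson (⊥ : Ideal R) := by
    rw [hj]
    refine add_mem (add_mem (add_mem (add_mem (add_mem (add_mem hja ?_) ?_) ?_) ?_) ?_) ?_
    exacts [hJr (hJl hjb a) bp, hJr (hJl hjc cp) a, hJr (hJl hjb ja) bp,
      hJr (hJl hjc cp) ja, hJr (hJl hjb (cp * jc * a)) bp, hJr (hJl hjb (cp * jc * ja)) bp]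
  have hu : IsUnit (1 + j * y) := isUnit_one_add_of_mem_jacobson_bot (hJr hjJ y)
  refine ⟨hu, ?_⟩
  have hu' : IsUnit (1 + y * j) := isUnit_one_add_of_mem_jacobson_bot (hJl hjJ y)
  have hβ : IsUnit (1 + jb * bp) := isUnit_one_add_of_mem_jacobson_bot (hJr hjb bp)
  have hγ : IsUnit (1 + cp * jc) := isUnit_one_add_of_mem_jacobson_bot (hJl hjc cp)
  have hv : IsUnit (1 + bp * jb) := isUnit_one_add_of_mem_jacobson_bot (hJl hjb bp)
  set iu := Ring.inverse (1 + j * y) with hiu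
  set iu' := Ring.inverse (1 + y * j) with hiu'
  set iβ := Ring.inverse (1 + jb * bp) with hiβ
  set iγ := Ring.inverse (1 + cp * jc) with hiγ
  set iv := Ring.inverse (1 + bp * jb) with hiv
  have huiu : (1 + j * y) * iu = 1 := by rw [hiu]; exact Ring.mul_inverse_cancel _ hu
  have hiuu : iu * (1 + j * y) = 1 := by rw [hiu]; exact Ring.inverse_mul_cancel _ hu
  have hiu'u' : iu' * (1 + y * j) = 1 := by rw [hiu']; exact Ring.inverse_mul_cancel _ hu'
  have hββ : (1 + jb * bp) * iβ = 1 := by rw [hiβ]; exact Ring.mul_inverse_cancel _ hβ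
  have hiββ : iβ * (1 + jb * bp) = 1 := by rw [hiβ]; exact Ring.inverse_mul_cancel _ hβ
  have hγγ : (1 + cp * jc) * iγ = 1 := by rw [hiγ]; exact Ring.mul_inverse_cancel _ hγ
  have hiγγ : iγ * (1 + cp * jc) = 1 := by rw [hiγ]; exact Ring.inverse_mul_cancel _ hγ
  have hvv : (1 + bp * jb) * iv = 1 := by rw [hiv]; exact Ring.mul_inverse_cancel _ hv
  -- the key factorization of `a + j`
  have haj : a + j = (1 + cp * jc) * (a + ja) * (1 + jb * bp) := by rw [hj]; noncomm_ring
  -- `y * iu = iu' * y`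
  have F1 : y * iu = iu' * y := by
    calc y * iu = iu' * (1 + y * j) * y * iu := by rw [hiu'u', one_mul]
    _ = iu' * ((1 + y * j) * y) * iu := by rw [mul_assoc iu']
    _ = iu' * (y * (1 + j * y)) * iu := by rw [show (1 + y * j) * y = y * (1 + j * y) by noncomm_ring]
    _ = iu' * y * ((1 + j * y) * iu) := by rw [mul_assoc, mul_assoc, mul_assoc]
    _ = iu' * y := by rw [huiu, mul_one]
  -- `y * iu` is a (b,c)-inverse of `a + j`
  have L1 : c * (a + j) * (y * iu) = c := by
    linear_combination (norm := noncomm_ring) hcay * iu + c * huiu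
  have L2 : (y * iu) * (a + j) * b = b := by
    linear_combination (norm := noncomm_ring) F1 * ((a + j) * b) + iu' * hyab + hiu'u' * b
  -- `iβ * (b + jb) ∈ bR`
  have K2 : iβ * (b + jb) = b * (1 + bp * jb * iv * (1 - bp * b)) := by
    have stepA : (1 + jb * bp) * (b + jb * iv * (1 - bp * b)) = b + jb := by
      linear_combination (norm := noncomm_ring) jb * hvv * (1 - bp * b)
    calc iβ * (b + jb) = iβ * ((1 + jb * bp) * (b + jb * iv * (1 - bp * b))) := by rw [stepA]
    _ = iβ * (1 + jb * bp) * (b + jb * iv * (1 - bp * b)) := by rw [← mul_assoc]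
    _ = b + jb * iv * (1 - bp * b) := by rw [hiββ, one_mul]
    _ = b * (1 + bp * jb * iv * (1 - bp * b)) := by linear_combination (norm := noncomm_ring) hb0
  -- `(c + jc) * iγ ∈ Rc`
  have K1 : (c + jc) * iγ = (1 + (1 - c * cp) * jc * iγ * cp) * c := by
    have stepA : (c + (1 - c * cp) * jc * iγ) * (1 + cp * jc) = c + jc := by
      linear_combination (norm := noncomm_ring) (1 - c * cp) * jc * hiγγ
    calc (c + jc) * iγ = (c + (1 - c * cp) * jc * iγ) * (1 + cp * jc) * iγ := by rw [stepA]
    _ = (c + (1 - c * cp) * jc * iγ) * ((1 + cp * jc) * iγ) := by rw [mul_assoc (c + (1 - c * cp) * jc * iγ)]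
    _ = c + (1 - c * cp) * jc * iγ := by rw [hγγ, mul_one]
    _ = (1 + (1 - c * cp) * jc * iγ * cp) * c := by linear_combination (norm := noncomm_ring) hc0
  refine ⟨?_, ?_, ⟨bp * y * iu * (1 + cp * jc), ?_⟩,
    ⟨(1 + jb * bp) * t * (1 - c * iu * j * t) * c * cp, ?_⟩⟩
  · -- c' a' y' = c'
    linear_combination (norm := noncomm_ring)
      (-(c + jc)) * hiγγ * ((a + ja) * (1 + jb * bp) * (y * iu) * (1 + cp * jc))
      - (c + jc) * iγ * haj * ((y * iu) * (1 + cp * jc))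
      + K1 * ((a + j) * (y * iu) * (1 + cp * jc))
      + (1 + (1 - c * cp) * jc * iγ * cp) * L1 * (1 + cp * jc)
      - K1 * (1 + cp * jc)
      + (c + jc) * hiγγ
  · -- y' a' b' = b'
    linear_combination (norm := noncomm_ring)
      (-((1 + jb * bp) * (y * iu) * (1 + cp * jc) * (a + ja))) * hββ * (b + jb)
      - (1 + jb * bp) * (y * iu) * haj * (iβ * (b + jb))
      + (1 + jb * bp) * (y * iu) * (a + j) * K2
      + (1 + jb * bp) * L2 * (1 + bp * jb * iv * (1 - bp * b))
      - (1 + jb * bp) * K2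
      + hββ * (b + jb)
  · -- y' ∈ (b+jb) R
    rw [hs]
    linear_combination (norm := noncomm_ring) (-hb1) * (s * (iu * (1 + cp * jc)))
  · -- y' ∈ R (c+jc)
    linear_combination (norm := noncomm_ring)
      (1 + jb * bp) * ht * (iu * (1 + cp * jc))
      + (1 + jb * bp) * t * c * hiuu * (1 + cp * jc)
      - (1 + jb * bp) * t * (c * iu * j) * ht * (1 + cp * jc)
      - (1 + jb * bp) * t * (1 - c * iu * j * t) * hc1
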